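/- Let μ be a probability measure on the sphere S^{n−1} satisfying the ACW(θ, α) condition for some α > 0 and some acute angle θ > 0, and let P = P_μ be the generalized Kaczmarz projection with respect to μ. Then for any x, z ∈ ℝⁿ such that the angle between them is less than θ, E‖Pz − x‖₂² ≤ (1 − α/n)·‖z − x‖₂². -/

import Mathlib

open MeasureTheory ProbabilityTheory
open scoped RealInnerProductSpace ENNReal BigOperators

noncomputable section

/-- `ℝⁿ` with the Euclidean structure. -/
abbrev Euc (n : ℕ) := EuclideanSpace ℝ (Fin n)

/-- The sign function used in the paper: `sgn t = 1` if `t ≥ 0` and `-1` otherwise. -/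
def sgn (t : ℝ) : ℝ := if 0 ≤ t then 1 else -1

/-- One (generalized) Kaczmarz step for phase retrieval with signal `x`,
measurement vector `a`, applied to the current iterate `z`:
`Pz = z + (sign(⟨a,z⟩)·|⟨a,x⟩| − ⟨a,z⟩) a`. -/
def kacStep {n : ℕ} (x a z : Euc n) : Euc n :=
  z + (sgn ⟪a, z⟫ * |⟪a, x⟫| - ⟪a, z⟫) • a

/-- The randomized Kaczmarz iterates `X_k = P_k ⋯ P_1 x₀`, where step `k+1`
uses the measurement vector `a k`. -/
def kacIter {n : ℕ} (x : Euc n) (a : ℕ → Euc n) (x0 : Euc n) : ℕ → Euc n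
  | 0 => x0
  | k + 1 => kacStep x (a k) (kacIter x a x0 k)

/-- The spherical wedge `W_{x,z}`: points of the unit sphere where the signs of
`⟨v,x⟩` and `⟨v,z⟩` disagree. -/
def wedge {n : ℕ} (x z : Euc n) : Set (Euc n) :=
  {v | v ∈ Metric.sphere (0 : Euc n) 1 ∧ sgn ⟪v, x⟫ ≠ sgn ⟪v, z⟫}

/-- The matrix `E_{a∼μ}[a aᵀ]`. -/
def covMat {n : ℕ} (μ : Measure (Euc n)) : Matrix (Fin n) (Fin n) ℝ :=
  Matrix.of fun i j => ∫ a, a i * a j ∂μ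

/-- The matrix `E_{a∼μ}[a aᵀ 1_W(a)]`. -/
def covMatOn {n : ℕ} (μ : Measure (Euc n)) (W : Set (Euc n)) : Matrix (Fin n) (Fin n) ℝ :=
  Matrix.of fun i j => ∫ a in W, a i * a j ∂μ

/-- The quadratic form `vᵀ M v` of a matrix. -/
def quadForm {n : ℕ} (M : Matrix (Fin n) (Fin n) ℝ) (v : Euc n) : ℝ :=
  ∑ i, ∑ j, v i * M i j * v j

/-- The smallest eigenvalue of a symmetric matrix, via the Rayleigh quotient
characterization `λ_min(M) = inf_{‖v‖=1} vᵀMv`. -/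
def lamMin {n : ℕ} (M : Matrix (Fin n) (Fin n) ℝ) : ℝ :=
  ⨅ v : {v : Euc n // ‖v‖ = 1}, quadForm M (v : Euc n)

/-- The largest eigenvalue of a symmetric matrix, via the Rayleigh quotient
characterization `λ_max(M) = sup_{‖v‖=1} vᵀMv`. -/
def lamMax {n : ℕ} (M : Matrix (Fin n) (Fin n) ℝ) : ℝ :=
  ⨆ v : {v : Euc n // ‖v‖ = 1}, quadForm M (v : Euc n)

/-- The uniform probability measure on the unit sphere `S^{n-1} ⊂ ℝⁿ`:
the normalized `(n-1)`-dimensional Hausdorff measure on the sphere. -/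
def sphereUniform (n : ℕ) : Measure (Euc n) :=
  (μH[(n : ℝ) - 1] (Metric.sphere (0 : Euc n) 1))⁻¹ •
    (μH[(n : ℝ) - 1]).restrict (Metric.sphere (0 : Euc n) 1)

/-- The `ACW(θ, α)` (anti-concentration on wedges) condition: for every wedge `W`
of angle less than `θ`, `λ_min(E[aaᵀ] − 4 E[aaᵀ 1_W(a)]) ≥ α/n`. -/
def ACW {n : ℕ} (μ : Measure (Euc n)) (θ α : ℝ) : Prop :=
  ∀ x z : Euc n, x ≠ 0 → z ≠ 0 → InnerProductGeometry.angle x z < θ →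
    lamMin (covMat μ - (4 : ℝ) • covMatOn μ (wedge x z)) ≥ α / n

/-- The hitting time `τ = min{k : X_k ∉ B}` (equal to `⊤ = ∞` if the trajectory
never leaves `B`). -/
def hitTime {n : ℕ} (B : Set (Euc n)) (X : ℕ → Euc n) : ℕ∞ :=
  ⨅ j ∈ {j : ℕ | X j ∉ B}, (j : ℕ∞)

/-- The stopped iterate `X_{τ ∧ k}` where `τ = hitTime B`. -/
def stoppedIter {n : ℕ} (x : Euc n) (a : ℕ → Euc n) (x0 : Euc n) (B : Set (Euc n)) (k : ℕ) :
    Euc n :=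
  kacIter x a x0 (min (hitTime B (kacIter x a x0)) (k : ℕ∞)).toNat

/-- The filtration `(F_k)` where `F_k = σ(a_0, …, a_{k-1})` is generated by the
first `k` measurement vectors. -/
def measFiltration {Ω : Type*} {mΩ : MeasurableSpace Ω} {n : ℕ}
    (A : ℕ → Ω → Euc n) (hA : ∀ i, Measurable (A i)) : Filtration ℕ mΩ where
  seq k := ⨆ j ∈ Set.Iio k, MeasurableSpace.comap (A j) inferInstance
  mono' _ _ hij := biSup_mono fun _ ha => lt_of_lt_of_le ha hij
  le' _ := iSup₂_le fun j _ => measurable_iff_comap_le.mp (hA j)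

/-- The set `S_τ` of `{0,1}`-vectors of length `m` with at most `τ·m` ones. -/
def selVecs (m : ℕ) (τ : ℝ) : Set (Fin m → ℝ) :=
  {s | (∀ i, s i = 0 ∨ s i = 1) ∧ ∑ i, s i ≤ τ * m}

/-- The Euclidean unit ball `B₂ⁿ ⊂ ℝⁿ`. -/
def unitBall (n : ℕ) : Set (Euc n) :=
  {v | ‖v‖ ≤ 1}

/-- A process `(Y_t)_{t ∈ T}` has *mixed tail increments* with respect to a pair of
metrics `(d₁, d₂)`: there are constants `c, C > 0` with
`P(|Y_s − Y_t| ≥ c(√u d₂(s,t) + u d₁(s,t))) ≤ C e^{−u}` for all `s,t,u`. -/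
def HasMixedTailIncrements {Ω T : Type*} [MeasurableSpace Ω] (P : Measure Ω)
    (Y : T → Ω → ℝ) (d₁ d₂ : T → T → ℝ) : Prop :=
  ∃ c C : ℝ, 0 < c ∧ 0 < C ∧ ∀ s t : T, ∀ u : ℝ, 0 < u →
    P {ω | c * (Real.sqrt u * d₂ s t + u * d₁ s t) ≤ |Y s ω - Y t ω|} ≤
      ENNReal.ofReal (C * Real.exp (-u))

/-- An admissible sequence of subsets: `|T₀| = 1` and `|T_k| ≤ 2^(2^k)` for `k ≥ 1`
(the sets are taken nonempty so that distances to them are meaningful). -/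
def Admissible {T : Type*} (Ts : ℕ → Finset T) : Prop :=
  (Ts 0).card = 1 ∧ (∀ k, 1 ≤ k → (Ts k).card ≤ 2 ^ 2 ^ k) ∧ ∀ k, (Ts k).Nonempty

/-- The distance from a point to a finite set, for an abstract metric `d`. -/
def distToFinset {T : Type*} (d : T → T → ℝ) (t : T) (S : Finset T) : ℝ :=
  sInf ((fun u => d t u) '' (S : Set T))

/-- Talagrand's `γ_α` functional of a metric space `(T, d)` (here `T` is a type and
`d` an abstract metric on it): `γ_α(T,d) = inf_{(T_k)} sup_t Σ_k 2^{k/α} d(t, T_k)`,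
the infimum being over admissible sequences. -/
def gammaFunctional {T : Type*} (α : ℝ) (d : T → T → ℝ) : ℝ :=
  ⨅ Ts : {Ts : ℕ → Finset T // Admissible Ts},
    ⨆ t : T, ∑' k : ℕ, (2 : ℝ) ^ ((k : ℝ) / α) * distToFinset d t ((Ts : ℕ → Finset T) k)

end

section Helpers

open scoped RealInnerProductSpace

private lemma sgn_mul_abs' (t : ℝ) : sgn t * |t| = t := by
  unfold sgn; split_ifs with h
  · rw [abs_of_nonneg h]; ring
  · rw [abs_of_neg (lt_of_not_ge h)]; ring

private lemma kac_pointwise {n : ℕ} (x z a : Euc n) (ha : ‖a‖ = 1) :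
    ‖kacStep x a z - x‖ ^ 2 ≤ ‖z - x‖ ^ 2 - ⟪a, z - x⟫ ^ 2
      + 4 * (wedge x z).indicator (fun v => ⟪v, z - x⟫ ^ 2) a := by
  have hstep : kacStep x a z - x = (z - x) + (sgn ⟪a, z⟫ * |⟪a, x⟫| - ⟪a, z⟫) • a := by
    unfold kacStep; abel
  have hzx : ⟪z - x, a⟫ = ⟪a, z⟫ - ⟪a, x⟫ := by rw [real_inner_comm, inner_sub_right]
  have hexp : ‖kacStep x a z - x‖ ^ 2 =
      ‖z - x‖ ^ 2 + 2 * ((sgn ⟪a, z⟫ * |⟪a, x⟫| - ⟪a, z⟫) * (⟪a, z⟫ - ⟪a, x⟫))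
        + (sgn ⟪a, z⟫ * |⟪a, x⟫| - ⟪a, z⟫) ^ 2 := by
    rw [hstep, norm_add_sq_real, real_inner_smul_right, norm_smul, hzx, ha,
      Real.norm_eq_abs, mul_pow, sq_abs]
    ring
  have hd : ⟪a, z - x⟫ = ⟪a, z⟫ - ⟪a, x⟫ := inner_sub_right _ _ _
  by_cases hw : sgn ⟪a, x⟫ = sgn ⟪a, z⟫
  · have hmem : a ∉ wedge x z := fun h => h.2 hw
    rw [Set.indicator_of_notMem hmem, hexp, hd]
    have hss : sgn ⟪a, z⟫ * |⟪a, x⟫| = ⟪a, x⟫ := by rw [← hw, sgn_mul_abs']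
    rw [hss]; nlinarith [sq_nonneg (⟪a, z⟫ - ⟪a, x⟫)]
  · have hmem : a ∈ wedge x z := ⟨by rwa [mem_sphere_zero_iff_norm], hw⟩
    rw [Set.indicator_of_mem hmem, hexp, hd]
    set s := ⟪a, x⟫ with hs
    set t := ⟪a, z⟫ with ht
    by_cases h1 : 0 ≤ s <;> by_cases h2 : 0 ≤ t <;>
      simp only [sgn, h1, h2, if_true, if_false] at hw ⊢
    · exact absurd trivial hw
    · push_neg at h2
      rw [abs_of_nonneg h1]
      nlinarith [mul_pos (neg_pos.2 h2) (by linarith : (0:ℝ) < 2 * s - t)]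
    · push_neg at h1
      rw [abs_of_neg h1]
      nlinarith [mul_nonneg h2 (by linarith : (0:ℝ) ≤ t - 2 * s)]
    · exact absurd trivial hw

private lemma coord_abs_le_norm {n : ℕ} (a : Euc n) (i : Fin n) : |a i| ≤ ‖a‖ := by
  have h : |a i| = Real.sqrt (|a i| ^ 2) := by rw [Real.sqrt_sq_eq_abs, abs_abs]
  rw [h, EuclideanSpace.norm_eq]
  apply Real.sqrt_le_sqrt
  simpa [sq_abs, Real.norm_eq_abs] using
    Finset.single_le_sum (f := fun j => (a j) ^ 2) (fun j _ => by positivity) (Finset.mem_univ i)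

private lemma lamMin_le_quadForm {n : ℕ} (M : Matrix (Fin n) (Fin n) ℝ) (v : Euc n)
    (hv : ‖v‖ = 1) : lamMin M ≤ quadForm M v := by
  have hbdd : BddBelow (Set.range fun u : {u : Euc n // ‖u‖ = 1} => quadForm M (u : Euc n)) := by
    refine ⟨-(∑ i, ∑ j, |M i j|), ?_⟩
    rintro r ⟨⟨u, hu⟩, rfl⟩
    have hcoord : ∀ i, |u i| ≤ 1 := fun i => (coord_abs_le_norm u i).trans_eq hu
    rw [← Finset.sum_neg_distrib]
    refine Finset.sum_le_sum fun i _ => ?_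
    rw [← Finset.sum_neg_distrib]
    refine Finset.sum_le_sum fun j _ => ?_
    have h1 : |u i * M i j * u j| ≤ |M i j| := by
      rw [abs_mul, abs_mul]
      calc |u i| * |M i j| * |u j| ≤ 1 * |M i j| * 1 := by
            gcongr <;> [exact hcoord i; exact hcoord j]
        _ = |M i j| := by ring
    linarith [neg_abs_le (u i * M i j * u j)]
  exact ciInf_le hbdd ⟨v, hv⟩

private lemma quadForm_smul' {n : ℕ} (M : Matrix (Fin n) (Fin n) ℝ) (c : ℝ) (w : Euc n) :
    quadForm M (c • w) = c ^ 2 * quadForm M w := by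
  unfold quadForm
  rw [Finset.mul_sum]
  refine Finset.sum_congr rfl fun i _ => ?_
  rw [Finset.mul_sum]
  refine Finset.sum_congr rfl fun j _ => ?_
  simp only [PiLp.smul_apply, smul_eq_mul]
  ring

private lemma quadForm_sub_smul' {n : ℕ} (A B : Matrix (Fin n) (Fin n) ℝ) (c : ℝ) (w : Euc n) :
    quadForm (A - c • B) w = quadForm A w - c * quadForm B w := by
  unfold quadForm
  rw [Finset.mul_sum, ← Finset.sum_sub_distrib]
  refine Finset.sum_congr rfl fun i _ => ?_
  rw [Finset.mul_sum, ← Finset.sum_sub_distrib]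
  refine Finset.sum_congr rfl fun j _ => ?_
  simp only [Matrix.sub_apply, Matrix.smul_apply, smul_eq_mul]
  ring

private lemma sgn_measurable {n : ℕ} (y : Euc n) : Measurable (fun a : Euc n => sgn ⟪a, y⟫) := by
  unfold sgn
  exact Measurable.ite
    (measurableSet_le measurable_const ((continuous_id.inner continuous_const).measurable))
    measurable_const measurable_const

private lemma wedge_measurable {n : ℕ} (x z : Euc n) : MeasurableSet (wedge x z) := by
  refine MeasurableSet.inter ?_ ?_
  · exact Metric.isClosed_sphere.measurableSet
  · exact (measurableSet_eq_fun (sgn_measurable x) (sgn_measurable z)).compl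

private lemma integral_inner_sq {n : ℕ} (ν : MeasureTheory.Measure (Euc n))
    [MeasureTheory.IsFiniteMeasure ν] (hb : ∀ᵐ a ∂ν, ‖a‖ = 1) (w : Euc n) :
    ∫ a, ⟪a, w⟫ ^ 2 ∂ν = ∑ i, ∑ j, w i * (∫ a, a i * a j ∂ν) * w j := by
  have hmeas : ∀ i j : Fin n,
      MeasureTheory.AEStronglyMeasurable (fun a : Euc n => w i * (a i * a j) * w j) ν :=
    fun i j => ((continuous_const.mul ((EuclideanSpace.proj i (𝕜 := ℝ)).continuous.mul
      (EuclideanSpace.proj j (𝕜 := ℝ)).continuous)).mul continuous_const).aestronglyMeasurable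
  have hint : ∀ i j : Fin n,
      MeasureTheory.Integrable (fun a : Euc n => w i * (a i * a j) * w j) ν := by
    intro i j
    refine MeasureTheory.Integrable.mono'
      (MeasureTheory.integrable_const (|w i| * (1 * 1) * |w j|)) (hmeas i j) ?_
    filter_upwards [hb] with a ha
    have hi : |a i| ≤ 1 := (coord_abs_le_norm a i).trans_eq ha
    have hj : |a j| ≤ 1 := (coord_abs_le_norm a j).trans_eq ha
    rw [Real.norm_eq_abs, abs_mul, abs_mul, abs_mul]
    gcongr
  calc ∫ a, ⟪a, w⟫ ^ 2 ∂ν = ∫ a, ∑ i, ∑ j, w i * (a i * a j) * w j ∂ν := by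
        refine MeasureTheory.integral_congr_ae (Filter.Eventually.of_forall fun a => ?_)
        have hia : ⟪a, w⟫ = ∑ i, a i * w i := by
          simp [PiLp.inner_apply, RCLike.inner_apply]
          exact Finset.sum_congr rfl fun i _ => mul_comm _ _
        simp only [hia, sq, Finset.sum_mul_sum]
        exact Finset.sum_congr rfl fun i _ => Finset.sum_congr rfl fun j _ => by ring
    _ = ∑ i, ∑ j, ∫ a, w i * (a i * a j) * w j ∂ν := by
        rw [MeasureTheory.integral_finset_sum _ fun i _ =>
          MeasureTheory.integrable_finset_sum _ fun j _ => hint i j]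
        exact Finset.sum_congr rfl fun i _ =>
          MeasureTheory.integral_finset_sum _ fun j _ => hint i j
    _ = ∑ i, ∑ j, w i * (∫ a, a i * a j ∂ν) * w j := by
        refine Finset.sum_congr rfl fun i _ => Finset.sum_congr rfl fun j _ => ?_
        rw [MeasureTheory.integral_mul_const, MeasureTheory.integral_const_mul]

end Helpers

/-- **Lemma (Expected decrement for an ACW measure).** Let `μ` be a probability
measure on `S^{n−1}` satisfying `ACW(θ, α)` for some `α > 0` and acute angle `θ > 0`,
and let `P = P_μ` be the generalized Kaczmarz projection with respect to `μ`. Then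
for any `x, z` making angle less than `θ`, `E‖Pz − x‖² ≤ (1 − α/n)‖z − x‖²`. -/
theorem expected_decrement_ACW {n : ℕ} (μ : Measure (Euc n)) [IsProbabilityMeasure μ]
    (hsupp : ∀ᵐ a ∂μ, a ∈ Metric.sphere (0 : Euc n) 1)
    (θ α : ℝ) (hα : 0 < α) (hθ : 0 < θ) (hθ' : θ < Real.pi / 2) (hACW : ACW μ θ α)
    (x z : Euc n) (hangle : InnerProductGeometry.angle x z < θ) :
    ∫ a, ‖kacStep x a z - x‖ ^ 2 ∂μ ≤ (1 - α / n) * ‖z - x‖ ^ 2 := by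
  have hx : x ≠ 0 := by
    rintro rfl
    rw [InnerProductGeometry.angle_zero_left] at hangle
    linarith
  have hz : z ≠ 0 := by
    rintro rfl
    rw [InnerProductGeometry.angle_zero_right] at hangle
    linarith
  have hae : ∀ᵐ a ∂μ, ‖a‖ = 1 := by
    filter_upwards [hsupp] with a ha
    rwa [mem_sphere_zero_iff_norm] at ha
  set w := z - x with hwdef
  set W := wedge x z with hWdef
  have hWmeas : MeasurableSet W := wedge_measurable x z
  set M := covMat μ - (4 : ℝ) • covMatOn μ W with hMdef
  have hcont : Continuous fun a : Euc n => ⟪a, w⟫ ^ 2 :=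
    (continuous_id.inner continuous_const).pow 2
  have hsq_int : Integrable (fun a : Euc n => ⟪a, w⟫ ^ 2) μ := by
    refine Integrable.mono' (integrable_const (‖w‖ ^ 2)) hcont.aestronglyMeasurable ?_
    filter_upwards [hae] with a ha
    rw [Real.norm_eq_abs, abs_of_nonneg (sq_nonneg _)]
    have h1 : |⟪a, w⟫| ≤ ‖w‖ := by
      have := abs_real_inner_le_norm a w
      rwa [ha, one_mul] at this
    nlinarith [abs_nonneg ⟪a, w⟫, sq_abs ⟪a, w⟫]
  have hind_int : Integrable (W.indicator fun v : Euc n => ⟪v, w⟫ ^ 2) μ :=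
    hsq_int.indicator hWmeas
  have hf_int : Integrable
      (fun a : Euc n => ‖w‖ ^ 2 - ⟪a, w⟫ ^ 2 + 4 * W.indicator (fun v => ⟪v, w⟫ ^ 2) a) μ :=
    ((integrable_const _).sub hsq_int).add (hind_int.const_mul 4)
  have hgmeas : AEStronglyMeasurable (fun a : Euc n => ‖kacStep x a z - x‖ ^ 2) μ := by
    have h1 : Measurable fun a : Euc n => (sgn ⟪a, z⟫ * |⟪a, x⟫| - ⟪a, z⟫) :=
      ((sgn_measurable z).mul (continuous_id.inner continuous_const).measurable.abs).sub
        (continuous_id.inner continuous_const).measurable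
    have h2 : Measurable fun a : Euc n => kacStep x a z := by
      unfold kacStep
      exact measurable_const.add (h1.smul measurable_id)
    exact ((h2.sub measurable_const).norm.pow_const 2).aestronglyMeasurable
  have hg_int : Integrable (fun a : Euc n => ‖kacStep x a z - x‖ ^ 2) μ := by
    refine Integrable.mono' (integrable_const ((‖w‖ + (‖x‖ + ‖z‖)) ^ 2)) hgmeas ?_
    filter_upwards [hae] with a ha
    rw [Real.norm_eq_abs, abs_of_nonneg (sq_nonneg _)]
    have hb1 : ‖kacStep x a z - x‖ ≤ ‖w‖ + (‖x‖ + ‖z‖) := by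
      have hstep : kacStep x a z - x = w + (sgn ⟪a, z⟫ * |⟪a, x⟫| - ⟪a, z⟫) • a := by
        rw [hwdef]; unfold kacStep; abel
      rw [hstep]
      refine (norm_add_le _ _).trans ?_
      have hsmul : ‖(sgn ⟪a, z⟫ * |⟪a, x⟫| - ⟪a, z⟫) • a‖ ≤ ‖x‖ + ‖z‖ := by
        rw [norm_smul, ha, mul_one, Real.norm_eq_abs]
        have h3 : |sgn ⟪a, z⟫| = 1 := by unfold sgn; split_ifs <;> simp
        have h4 : |⟪a, x⟫| ≤ ‖x‖ := by
          have := abs_real_inner_le_norm a x; rwa [ha, one_mul] at this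
        have h5 : |⟪a, z⟫| ≤ ‖z‖ := by
          have := abs_real_inner_le_norm a z; rwa [ha, one_mul] at this
        calc abs (sgn ⟪a, z⟫ * abs ⟪a, x⟫ - ⟪a, z⟫)
            ≤ abs (sgn ⟪a, z⟫ * abs ⟪a, x⟫) + abs ⟪a, z⟫ := abs_sub _ _
          _ = abs ⟪a, x⟫ + abs ⟪a, z⟫ := by rw [abs_mul, h3, abs_abs, one_mul]
          _ ≤ ‖x‖ + ‖z‖ := add_le_add h4 h5
      linarith
    nlinarith [norm_nonneg (kacStep x a z - x), norm_nonneg w, norm_nonneg x, norm_nonneg z]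
  have hpt : ∀ᵐ a ∂μ, ‖kacStep x a z - x‖ ^ 2 ≤
      ‖w‖ ^ 2 - ⟪a, w⟫ ^ 2 + 4 * W.indicator (fun v => ⟪v, w⟫ ^ 2) a := by
    filter_upwards [hae] with a ha
    exact kac_pointwise x z a ha
  have h1 : ∫ a, ‖kacStep x a z - x‖ ^ 2 ∂μ ≤
      ∫ a, (‖w‖ ^ 2 - ⟪a, w⟫ ^ 2 + 4 * W.indicator (fun v => ⟪v, w⟫ ^ 2) a) ∂μ :=
    integral_mono_ae hg_int hf_int hpt
  have h2 : ∫ a, (‖w‖ ^ 2 - ⟪a, w⟫ ^ 2 + 4 * W.indicator (fun v => ⟪v, w⟫ ^ 2) a) ∂μ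
      = ‖w‖ ^ 2 - quadForm M w := by
    have e0 : ∫ a, (‖w‖ ^ 2 - ⟪a, w⟫ ^ 2 + 4 * W.indicator (fun v => ⟪v, w⟫ ^ 2) a) ∂μ
        = (∫ a, (‖w‖ ^ 2 - ⟪a, w⟫ ^ 2) ∂μ) + ∫ a, 4 * W.indicator (fun v => ⟪v, w⟫ ^ 2) a ∂μ :=
      integral_add ((integrable_const _).sub hsq_int) (hind_int.const_mul 4)
    have ea : ∫ a, (‖w‖ ^ 2 - ⟪a, w⟫ ^ 2) ∂μ
        = (∫ _a : Euc n, (‖w‖ ^ 2 : ℝ) ∂μ) - ∫ a, ⟪a, w⟫ ^ 2 ∂μ :=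
      integral_sub (integrable_const _) hsq_int
    have eb : ∫ a, 4 * W.indicator (fun v => ⟪v, w⟫ ^ 2) a ∂μ
        = 4 * ∫ a in W, ⟪a, w⟫ ^ 2 ∂μ := by
      rw [integral_const_mul, integral_indicator hWmeas]
    rw [e0, ea, eb, integral_const]
    have e1 : ∫ a, ⟪a, w⟫ ^ 2 ∂μ = ∑ i, ∑ j, w i * (∫ a, a i * a j ∂μ) * w j :=
      integral_inner_sq μ hae w
    have e2 : ∫ a in W, ⟪a, w⟫ ^ 2 ∂μ = ∑ i, ∑ j, w i * (∫ a in W, a i * a j ∂μ) * w j :=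
      integral_inner_sq (μ.restrict W) (ae_restrict_of_ae hae) w
    rw [e1, e2, hMdef, quadForm_sub_smul']
    have e3 : quadForm (covMat μ) w = ∑ i, ∑ j, w i * (∫ a, a i * a j ∂μ) * w j := rfl
    have e4 : quadForm (covMatOn μ W) w = ∑ i, ∑ j, w i * (∫ a in W, a i * a j ∂μ) * w j := rfl
    rw [e3, e4]
    simp [measure_univ]
    ring
  have h3 : α / n * ‖w‖ ^ 2 ≤ quadForm M w := by
    rcases eq_or_ne w 0 with h0 | h0
    · simp [h0, quadForm]
    · have hmin : lamMin M ≥ α / n := hACW x z hx hz hangle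
      have hwpos : (0 : ℝ) < ‖w‖ := norm_pos_iff.2 h0
      have hv : ‖(‖w‖⁻¹ • w : Euc n)‖ = 1 := by
        rw [norm_smul, Real.norm_eq_abs, abs_inv, abs_norm]
        field_simp
      have hle := lamMin_le_quadForm M _ hv
      rw [quadForm_smul'] at hle
      have h6 : α / n ≤ ‖w‖⁻¹ ^ 2 * quadForm M w := le_trans hmin hle
      calc α / n * ‖w‖ ^ 2 ≤ (‖w‖⁻¹ ^ 2 * quadForm M w) * ‖w‖ ^ 2 := by
            exact mul_le_mul_of_nonneg_right h6 (sq_nonneg _)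
        _ = quadForm M w := by
            field_simp
  have hfinal : (1 - α / n) * ‖w‖ ^ 2 = ‖w‖ ^ 2 - α / n * ‖w‖ ^ 2 := by ring
  rw [hfinal]
  linarith
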